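/- Let (K, v) be a Henselian valued field, f ∈ O_v(K)[X], and a ∈ O_v(K) with 2·v(f'(a)) < v(f(a)), where f' is the formal derivative. Then there exists c ∈ O_v(K) with f(c) = 0 and v(c − a) = v(f(a)) − v(f'(a)). -/

import Mathlib

open Polynomial

variable {L : Type*} [Field L] {Γ : Type*} [LinearOrderedCommGroupWithZero Γ] (w : Valuation L Γ)

theorem aux_nat_le_one (n : ℕ) : w (n : L) ≤ 1 := by
  induction n with
  | zero => simp
  | succ n ih =>
    push_cast
    exact le_trans (w.map_add _ _) (max_le ih (le_of_eq w.map_one))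

theorem aux_eval_le_one {p : L[X]} (hp : ∀ i, w (p.coeff i) ≤ 1) {x : L} (hx : w x ≤ 1) :
    w (p.eval x) ≤ 1 := by
  rw [Polynomial.eval_eq_sum_range]
  refine w.map_sum_le fun i _ => ?_
  rw [w.map_mul, map_pow]
  exact mul_le_one' (hp i) (pow_le_one₀ (zero_le') hx)

theorem aux_deriv_coeff_le_one {p : L[X]} (hp : ∀ i, w (p.coeff i) ≤ 1) :
    ∀ i, w (p.derivative.coeff i) ≤ 1 := by
  intro i
  rw [Polynomial.coeff_derivative, w.map_mul]
  refine mul_le_one' (hp _) ?_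
  exact_mod_cast aux_nat_le_one w (i + 1)

/- assume previous lemmas compiled; just restate -/
theorem aux_taylor_coeff_le_one {p : L[X]} (hp : ∀ i, w (p.coeff i) ≤ 1) {y : L} (hy : w y ≤ 1)
    (k : ℕ) : w ((Polynomial.taylor y p).coeff k) ≤ 1 := by
  rw [Polynomial.taylor_coeff]
  refine aux_eval_le_one w (fun i => ?_) hy
  rw [Polynomial.hasseDeriv_coeff, w.map_mul]
  exact mul_le_one' (aux_nat_le_one w _) (hp _)

theorem aux_eval_sub_le {p : L[X]} (hp : ∀ i, w (p.coeff i) ≤ 1) {x y : L} (hy : w y ≤ 1)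
    {s : Γ} (hxy : w (x - y) ≤ s) (hs : s ≤ 1) :
    w (p.eval x - p.eval y) ≤ s := by
  have hev : p.eval x = ∑ i ∈ Finset.range ((Polynomial.taylor y p).natDegree + 1),
      (Polynomial.taylor y p).coeff i * (x - y) ^ i := by
    have := Polynomial.taylor_eval y p (x - y)
    rw [sub_add_cancel] at this
    rw [← this, Polynomial.eval_eq_sum_range]
  rw [hev, Finset.sum_range_succ', Polynomial.taylor_coeff_zero, pow_zero, mul_one,
    add_sub_cancel_right]
  refine w.map_sum_le fun i _ => ?_
  rw [w.map_mul, map_pow]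
  calc w ((Polynomial.taylor y p).coeff (i + 1)) * w (x - y) ^ (i + 1)
      ≤ 1 * (s * 1) := by
        refine mul_le_mul' (aux_taylor_coeff_le_one w hp hy _) ?_
        rw [pow_succ, mul_comm]
        exact mul_le_mul' hxy (pow_le_one₀ zero_le' (le_trans hxy hs))
    _ = s := by rw [one_mul, mul_one]

theorem aux_div_coeff_le_one {q : L[X]} {c : L} (hc : w c ≤ 1)
    (hp : ∀ i, w (((X - C c) * q).coeff i) ≤ 1) : ∀ i, w (q.coeff i) ≤ 1 := by
  have key : ∀ m k, q.natDegree ≤ k + m → w (q.coeff k) ≤ 1 := by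
    intro m
    induction m with
    | zero =>
      intro k hk
      rcases lt_or_eq_of_le hk with h | h
      · rw [q.coeff_eq_zero_of_natDegree_lt (by omega)]; simp
      · have hk' : k = q.natDegree := by omega
        subst hk'
        rcases eq_or_ne q 0 with rfl | hq
        · simp
        · have : q.coeff q.natDegree = ((X - C c) * q).leadingCoeff := by
            rw [Polynomial.leadingCoeff_mul, Polynomial.leadingCoeff_X_sub_C, one_mul,
              Polynomial.leadingCoeff]
          rw [this, Polynomial.leadingCoeff]
          exact hp _
    | succ m ih =>
      intro k hk
      have h1 : q.coeff k = ((X - C c) * q).coeff (k + 1) + c * q.coeff (k + 1) := by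
        rw [mul_comm, Polynomial.coeff_mul_X_sub_C]
        ring
      rw [h1]
      refine le_trans (w.map_add _ _) (max_le (hp _) ?_)
      rw [w.map_mul]
      exact mul_le_one' hc (ih (k + 1) (by omega))
  exact fun i => key (q.natDegree) i (by omega)

theorem aux_deriv_prod_le (b : L) (t : Γ) :
    ∀ (R : Multiset L), (∀ r ∈ R, t ≤ w (r - b)) →
      t * w (((R.map fun r => X - C r).prod).derivative.eval b)
        ≤ w (((R.map fun r => X - C r).prod).eval b) := by
  refine Multiset.induction ?_ ?_
  · simp
  · intro a R ih hR
    have ha : t ≤ w (b - a) := by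
      rw [Valuation.map_sub_swap]
      exact hR a (Multiset.mem_cons_self _ _)
    have hR' : ∀ r ∈ R, t ≤ w (r - b) := fun r hr => hR r (Multiset.mem_cons_of_mem hr)
    rw [Multiset.map_cons, Multiset.prod_cons]
    set Q := ((R.map fun r => X - C r).prod) with hQ
    have hder : ((X - C a) * Q).derivative = Q + (X - C a) * Q.derivative := by
      rw [Polynomial.derivative_mul, Polynomial.derivative_X_sub_C, one_mul]
    rw [hder]
    simp only [Polynomial.eval_add, Polynomial.eval_mul, Polynomial.eval_sub, Polynomial.eval_X,
      Polynomial.eval_C]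
    refine le_trans (mul_le_mul' le_rfl (w.map_add _ _)) ?_
    rw [mul_max]
    refine max_le ?_ ?_
    · rw [w.map_mul]
      exact mul_le_mul' ha le_rfl
    · rw [w.map_mul, w.map_mul, mul_comm t, mul_assoc, mul_comm (w (Q.derivative.eval b)) t]
      exact mul_le_mul' le_rfl (ih hR')

/-- The core analysis over a (not nec. alg. closed) field where `F` splits. -/
theorem aux_core [DecidableEq L] {F : L[X]} {b c : L}
    (hF : ∀ i, w (F.coeff i) ≤ 1) (hb : w b ≤ 1)
    (hsplits : F.Splits)
    (hF0 : F.eval b ≠ 0)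
    (hquad : w (F.eval b) < w (F.derivative.eval b) ^ 2)
    (hcr : c ∈ F.roots)
    (hmin : ∀ r ∈ F.roots, w (c - b) ≤ w (r - b)) :
    w c ≤ 1 ∧ w (c - b) * w (F.derivative.eval b) = w (F.eval b) ∧
      ∀ c' ∈ F.roots.erase c, ¬ (w (c' - b) ≤ w (c - b)) := by
  have hFne : F ≠ 0 := fun h => hF0 (by simp [h])
  set R := F.roots with hR
  set t := w (c - b) with ht
  set lc := F.leadingCoeff with hlc
  have hfac : F = C lc * (R.map fun r => X - C r).prod :=
    hsplits.eq_prod_roots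
  -- derivative of F
  have hFder : F.derivative = C lc * ((R.map fun r => X - C r).prod).derivative := by
    conv_lhs => rw [hfac]
    rw [Polynomial.derivative_mul, Polynomial.derivative_C, zero_mul, zero_add]
  -- Step A
  have hA : t * w (F.derivative.eval b) ≤ w (F.eval b) := by
    have := aux_deriv_prod_le w b t R (fun r hr => hmin r hr)
    calc t * w (F.derivative.eval b)
        = w lc * (t * w (((R.map fun r => X - C r).prod).derivative.eval b)) := by
          rw [hFder, Polynomial.eval_mul, Polynomial.eval_C, w.map_mul]
          exact mul_left_comm _ _ _
      _ ≤ w lc * w (((R.map fun r => X - C r).prod).eval b) := mul_le_mul' le_rfl this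
      _ = w (F.eval b) := by
          conv_rhs => rw [hfac]
          rw [Polynomial.eval_mul, Polynomial.eval_C, w.map_mul]
  have hd0 : w (F.derivative.eval b) ≠ 0 := by
    intro h
    rw [h] at hquad
    simp at hquad
  have ht0 : t ≠ 0 := by
    rw [ht, Valuation.ne_zero_iff, sub_ne_zero]
    intro h
    subst h
    exact hF0 ((Polynomial.mem_roots hFne).mp hcr)
  have htlt : t < w (F.derivative.eval b) := by
    have h1 : w (F.derivative.eval b) * t < w (F.derivative.eval b) * w (F.derivative.eval b) := by
      rw [mul_comm (w (F.derivative.eval b)) t]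
      calc t * w (F.derivative.eval b) ≤ w (F.eval b) := hA
        _ < w (F.derivative.eval b) ^ 2 := hquad
        _ = w (F.derivative.eval b) * w (F.derivative.eval b) := sq _
    exact lt_of_mul_lt_mul_of_le₀ h1 (zero_lt_iff.mpr hd0) le_rfl
  have hd1 : w (F.derivative.eval b) ≤ 1 :=
    aux_eval_le_one w (aux_deriv_coeff_le_one w hF) hb
  have ht1 : t < 1 := lt_of_lt_of_le htlt hd1
  have hwc : w c ≤ 1 := by
    have : w c = w ((c - b) + b) := by rw [sub_add_cancel]
    rw [this]
    exact le_trans (w.map_add _ _) (max_le (le_of_lt (lt_of_lt_of_le ht1 le_rfl)) hb)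
  -- Step B : exact value equality via Taylor expansion at b
  have hBeq : w (F.eval b) = t * w (F.derivative.eval b) := by
    set G := Polynomial.taylor b F with hG
    set n := G.natDegree with hn
    have hev : (0 : L) = ∑ i ∈ Finset.range (n + 2), G.coeff i * (c - b) ^ i := by
      have h1 : G.eval (c - b) = F.eval c := by
        rw [hG, Polynomial.taylor_eval, sub_add_cancel]
      have h2 : F.eval c = 0 := (Polynomial.mem_roots hFne).mp hcr
      rw [← h2, ← h1, Polynomial.eval_eq_sum_range' (show G.natDegree < n + 2 by omega) (c - b)]
    rw [Finset.sum_range_succ', Finset.sum_range_succ'] at hev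
    set S := ∑ i ∈ Finset.range n, G.coeff (i + 1 + 1) * (c - b) ^ (i + 1 + 1) with hS
    have hc0 : G.coeff 0 = F.eval b := Polynomial.taylor_coeff_zero b F
    have hc1 : G.coeff 1 = F.derivative.eval b := Polynomial.taylor_coeff_one b F
    have hsum : F.eval b + F.derivative.eval b * (c - b) = -S := by
      rw [← hc0, ← hc1]
      linear_combination -hev
    have hwS : w S ≤ t * t := by
      refine w.map_sum_le fun i _ => ?_
      rw [w.map_mul, map_pow]
      calc w (G.coeff (i + 1 + 1)) * w (c - b) ^ (i + 1 + 1)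
          ≤ 1 * (t * t * t ^ i) := by
            refine mul_le_mul' (aux_taylor_coeff_le_one w hF hb _) (le_of_eq ?_)
            rw [← ht, pow_succ, pow_succ, mul_comm (t ^ i) t, mul_assoc,
              mul_comm (t ^ i) t, ← mul_assoc]
        _ ≤ 1 * (t * t * 1) :=
            mul_le_mul' le_rfl (mul_le_mul' le_rfl (pow_le_one₀ zero_le' (le_of_lt ht1)))
        _ = t * t := by rw [one_mul, mul_one]
    have hlt : t * t < w (F.derivative.eval b * (c - b)) := by
      rw [w.map_mul, mul_comm (w (F.derivative.eval b))]
      rw [← ht]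
      exact mul_lt_mul_of_pos_left htlt (zero_lt_iff.mpr ht0)
    have hfirst : w (F.eval b + F.derivative.eval b * (c - b)) = w S := by
      rw [hsum, w.map_neg]
    have hdecomp : F.eval b = (F.eval b + F.derivative.eval b * (c - b)) +
        (-(F.derivative.eval b * (c - b))) := by ring
    have hxlt : w (F.eval b + F.derivative.eval b * (c - b)) <
        w (F.derivative.eval b * (c - b)) :=
      lt_of_le_of_lt (hfirst.trans_le hwS) hlt
    have hmax := Valuation.map_add_of_distinct_val (v := w)
      (x := F.eval b + F.derivative.eval b * (c - b))
      (y := -(F.derivative.eval b * (c - b)))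
      (by rw [w.map_neg]; exact ne_of_lt hxlt)
    calc w (F.eval b) = w (F.derivative.eval b * (c - b)) := by
          rw [hdecomp, hmax, w.map_neg, max_eq_right (le_of_lt hxlt)]
      _ = t * w (F.derivative.eval b) := by rw [w.map_mul, mul_comm, ht]
  refine ⟨hwc, hBeq.symm, ?_⟩
  -- uniqueness of the closest root
  intro c' hc' hle
  have hc'R : c' ∈ R := Multiset.mem_of_mem_erase hc'
  set R₂ := (R.erase c).erase c' with hR₂
  have e1 : c' ::ₘ R₂ = R.erase c := Multiset.cons_erase hc'
  have e2 : c ::ₘ c' ::ₘ R₂ = R := by rw [e1]; exact Multiset.cons_erase hcr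
  set q₂ := C lc * (R₂.map fun r => X - C r).prod with hq₂def
  have hfac2 : F = (X - C c) * ((X - C c') * q₂) := by
    conv_lhs => rw [hfac, ← e2]
    rw [Multiset.map_cons, Multiset.map_cons, Multiset.prod_cons, Multiset.prod_cons, hq₂def]
    ring
  have hwc' : w c' ≤ 1 := by
    have h : w c' = w ((c' - b) + b) := by rw [sub_add_cancel]
    rw [h]
    exact le_trans (w.map_add _ _) (max_le (le_of_lt (lt_of_le_of_lt hle ht1)) hb)
  have hGco : ∀ i, w (((X - C c') * q₂).coeff i) ≤ 1 :=
    aux_div_coeff_le_one w hwc (fun i => by rw [← hfac2]; exact hF i)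
  have hq₂ : ∀ i, w (q₂.coeff i) ≤ 1 := aux_div_coeff_le_one w hwc' hGco
  have hFdc : F.derivative.eval c = (c - c') * q₂.eval c := by
    conv_lhs => rw [hfac2]
    rw [Polynomial.derivative_mul, Polynomial.derivative_X_sub_C, one_mul]
    simp [sub_self]
  have h1 : w (F.derivative.eval c) ≤ t := by
    rw [hFdc, w.map_mul]
    have hcc' : w (c - c') ≤ t := by
      have h : c - c' = (c - b) - (c' - b) := by ring
      rw [h]
      exact le_trans (w.map_sub _ _) (max_le le_rfl hle)
    calc w (c - c') * w (q₂.eval c) ≤ t * 1 :=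
          mul_le_mul' hcc' (aux_eval_le_one w hq₂ hwc)
      _ = t := mul_one t
  have h2 : w (F.derivative.eval c) = w (F.derivative.eval b) := by
    have hdiff : w (F.derivative.eval c - F.derivative.eval b) ≤ t :=
      aux_eval_sub_le w (aux_deriv_coeff_le_one w hF) hb le_rfl (le_of_lt ht1)
    have hdec : F.derivative.eval c = (F.derivative.eval c - F.derivative.eval b) +
        F.derivative.eval b := by ring
    have hmax2 := Valuation.map_add_of_distinct_val (v := w)
      (x := F.derivative.eval c - F.derivative.eval b)
      (y := F.derivative.eval b)
      (ne_of_lt (lt_of_le_of_lt hdiff htlt))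
    rw [hdec, hmax2, max_eq_right (le_of_lt (lt_of_le_of_lt hdiff htlt))]
  rw [h2] at h1
  exact absurd h1 (not_le.mpr htlt)



/-- A valued field `(K, v)` is Henselian if `v` extends uniquely, up to equivalence, to a
valuation on every algebraic extension of `K`. -/
def Valuation.IsHenselianValued (K : Type) [Field K] {Γ : Type}
    [LinearOrderedCommGroupWithZero Γ] (v : Valuation K Γ) : Prop :=
  ∀ (L : Type) [Field L] [Algebra K L], Algebra.IsAlgebraic K L →
    ∀ (Γ₁ Γ₂ : Type) [LinearOrderedCommGroupWithZero Γ₁] [LinearOrderedCommGroupWithZero Γ₂]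
      (w₁ : Valuation L Γ₁) (w₂ : Valuation L Γ₂),
      (w₁.comap (algebraMap K L)).IsEquiv v → (w₂.comap (algebraMap K L)).IsEquiv v →
        w₁.IsEquiv w₂

/-- Hensel's lemma for a Henselian valued field `(K, v)` (multiplicative notation: the
additive condition `2·v(f'(a)) < v(f(a))` reads `v(f(a)) < v(f'(a))²`, and the additive
conclusion `v(c - a) = v(f(a)) - v(f'(a))` reads `v(c - a) · v(f'(a)) = v(f(a))`):
given `f ∈ O_v(K)[X]` and `a ∈ O_v(K)` with `2·v(f'(a)) < v(f(a))`, there is a zero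
`c ∈ O_v(K)` of `f` with `v(c - a) = v(f(a)) - v(f'(a))`. -/
theorem henselian_newton_root (K : Type) [Field K] (Γ : Type)
    [LinearOrderedCommGroupWithZero Γ] (v : Valuation K Γ) (hv : v.IsHenselianValued K)
    (f : Polynomial K) (hf : ∀ i : ℕ, v (f.coeff i) ≤ 1)
    (a : K) (ha : v a ≤ 1)
    (hquad : v (f.eval a) < (v (f.derivative.eval a)) ^ 2) :
    ∃ c : K, v c ≤ 1 ∧ f.eval c = 0 ∧
      v (c - a) * v (f.derivative.eval a) = v (f.eval a) := by
  classical
  by_cases h0 : f.eval a = 0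
  · exact ⟨a, ha, h0, by rw [sub_self, map_zero, zero_mul, h0, map_zero]⟩
  set Kbar := AlgebraicClosure K with hKbar
  set ι : K →+* Kbar := algebraMap K Kbar with hι
  have hιinj : Function.Injective ι := ι.injective
  -- extend the valuation ring of v to a valuation subring of Kbar
  obtain ⟨A, hA, hlocal⟩ :=
    IsLocalRing.exists_factor_valuationRing (ι.comp (v.valuationSubring.subtype))
  set w := A.valuation with hw
  -- the extension agrees with v on K
  have W : ∀ x : K, w (ι x) ≤ 1 ↔ v x ≤ 1 := by
    intro x
    constructor
    · intro hwx
      by_contra hvx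
      push_neg at hvx
      have hx0 : x ≠ 0 := by
        rintro rfl
        rw [map_zero] at hvx
        exact absurd (le_of_lt hvx) (not_le.mpr zero_lt_one)
      have hinv : v x⁻¹ ≤ 1 := by
        rw [map_inv₀]
        exact inv_le_one_of_one_le₀ (le_of_lt hvx)
      have humem : ι x ∈ A.toSubring := (A.valuation_le_one_iff _).mp hwx
      have hunit : IsUnit ((ι.comp v.valuationSubring.subtype).codRestrict A.toSubring hA
          ⟨x⁻¹, hinv⟩) := by
        refine isUnit_iff_exists_inv.mpr ⟨⟨ι x, humem⟩, ?_⟩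
        apply Subtype.ext
        show ι x⁻¹ * ι x = 1
        rw [← map_mul, inv_mul_cancel₀ hx0, map_one]
      have huu : IsUnit (⟨x⁻¹, hinv⟩ : v.valuationSubring) := hlocal.map_nonunit _ hunit
      obtain ⟨y, hy⟩ := isUnit_iff_exists_inv.mp huu
      have hy' : x⁻¹ * (y : K) = 1 := congrArg Subtype.val hy
      have h1 : v x⁻¹ * v (y : K) = 1 := by rw [← v.map_mul, hy', v.map_one]
      have h2 : v x⁻¹ = 1 := by
        refine le_antisymm hinv ?_
        calc (1 : Γ) = v x⁻¹ * v (y : K) := h1.symm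
          _ ≤ v x⁻¹ * 1 := mul_le_mul' le_rfl y.2
          _ = v x⁻¹ := mul_one _
      have : v x = 1 := by
        have hx : v x * v x⁻¹ = 1 := by rw [← v.map_mul, mul_inv_cancel₀ hx0, v.map_one]
        rw [h2, mul_one] at hx
        exact hx
      rw [this] at hvx
      exact absurd hvx (lt_irrefl _)
    · intro hvx
      have : ι x = (ι.comp v.valuationSubring.subtype) ⟨x, hvx⟩ := rfl
      rw [this, A.valuation_le_one_iff]
      exact hA _
  have hequiv : (w.comap ι).IsEquiv v :=
    Valuation.isEquiv_of_val_le_one (fun {x} => W x)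
  have P : ∀ x y : K, v x ≤ v y ↔ w (ι x) ≤ w (ι y) := fun x y => (hequiv x y).symm
  -- the mapped polynomial
  set F := f.map ι with hF
  set b := ι a with hb
  have hFco : ∀ i, w (F.coeff i) ≤ 1 := by
    intro i
    rw [hF, Polynomial.coeff_map]
    exact (W _).mpr (hf i)
  have hwb : w b ≤ 1 := (W _).mpr ha
  have he : F.eval b = ι (f.eval a) := by
    rw [hF, hb, Polynomial.eval_map, Polynomial.eval₂_at_apply]
  have hde : F.derivative.eval b = ι (f.derivative.eval a) := by
    rw [hF, Polynomial.derivative_map, Polynomial.eval_map, Polynomial.eval₂_at_apply]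
  have hF0 : F.eval b ≠ 0 := by
    rw [he]
    exact fun h => h0 (hιinj (by rw [h, map_zero]))
  have hFne : F ≠ 0 := fun h => hF0 (by simp [h])
  have hquadw : w (F.eval b) < w (F.derivative.eval b) ^ 2 := by
    have hq' : ¬ v (f.derivative.eval a * f.derivative.eval a) ≤ v (f.eval a) := by
      rw [v.map_mul, ← sq]
      exact not_le.mpr hquad
    have := fun h => hq' ((P _ _).mpr h)
    rw [map_mul ι, ← hde, ← he] at this
    rw [sq]
    exact not_le.mp (by rw [← w.map_mul]; exact this)
  have hsp : F.Splits := by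
    exact IsAlgClosed.splits F
  -- roots are nonempty
  have hd0K : f.derivative.eval a ≠ 0 := by
    intro h
    rw [h, map_zero] at hquad
    simp at hquad
  have hfdeg : 1 ≤ f.natDegree := by
    by_contra h
    push_neg at h
    obtain ⟨x, hx⟩ := (Polynomial.natDegree_eq_zero (p := f)).mp (by omega)
    rw [← hx] at hd0K
    simp at hd0K
  have hcard : F.roots.card = F.natDegree := (Polynomial.splits_iff_card_roots).mp hsp
  have hFdeg : F.natDegree = f.natDegree := Polynomial.natDegree_map_eq_of_injective hιinj f
  have hroots_ne : F.roots ≠ 0 := by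
    intro h
    rw [h] at hcard
    simp [hFdeg] at hcard
    omega
  obtain ⟨c₀, hc₀⟩ := Multiset.exists_mem_of_ne_zero hroots_ne
  obtain ⟨c, hcF, hcmin'⟩ := Finset.exists_min_image F.roots.toFinset (fun r => w (r - b))
    ⟨c₀, Multiset.mem_toFinset.mpr hc₀⟩
  have hcr : c ∈ F.roots := Multiset.mem_toFinset.mp hcF
  have hcmin : ∀ r ∈ F.roots, w (c - b) ≤ w (r - b) := fun r hr =>
    hcmin' r (Multiset.mem_toFinset.mpr hr)
  obtain ⟨hwc, heqw, huniq⟩ := aux_core w hFco hwb hsp hF0 hquadw hcr hcmin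
  have hceval : F.eval c = 0 := (Polynomial.mem_roots hFne).mp hcr
  have hwd0 : w (F.derivative.eval b) ≠ 0 := by
    intro h
    rw [h] at hquadw
    simp at hquadw
  -- the minimal polynomial of c has degree 1
  have hcint : IsIntegral K c := Algebra.IsIntegral.isIntegral c
  set g := minpoly K c with hg
  have hgmon : g.Monic := minpoly.monic hcint
  have haevalc : Polynomial.aeval c g = 0 := minpoly.aeval K c
  have hgdvd : g ∣ f := minpoly.dvd K c
    (by rw [Polynomial.aeval_def, ← Polynomial.eval_map]; exact hceval)
  have hgm_dvd : g.map ι ∣ F := Polynomial.map_dvd ι hgdvd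
  have hgm_ne : g.map ι ≠ 0 := (hgmon.map ι).ne_zero
  have hdeg1 : g.natDegree = 1 := by
    by_contra hg1
    have hgpos : 0 < g.natDegree := minpoly.natDegree_pos hcint
    have hg2 : 2 ≤ g.natDegree := by omega
    set gm := g.map ι with hgm
    have hcgm : c ∈ gm.roots := by
      rw [Polynomial.mem_roots hgm_ne]
      show gm.eval c = 0
      rw [hgm, Polynomial.eval_map, ← Polynomial.aeval_def, haevalc]
    have hgmsp : gm.Splits := by
      exact IsAlgClosed.splits gm
    have hgmcard : gm.roots.card = gm.natDegree := (Polynomial.splits_iff_card_roots).mp hgmsp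
    have hgmdeg : gm.natDegree = g.natDegree := Polynomial.natDegree_map_eq_of_injective hιinj g
    have herase_ne : gm.roots.erase c ≠ 0 := by
      intro h
      have := Multiset.card_erase_of_mem hcgm
      rw [h] at this
      simp at this
      omega
    obtain ⟨c', hc'⟩ := Multiset.exists_mem_of_ne_zero herase_ne
    have hc'gm : c' ∈ gm.roots := Multiset.mem_of_mem_erase hc'
    have hc'F : F.eval c' = 0 := by
      obtain ⟨k, hk⟩ := hgm_dvd
      rw [hk, Polynomial.eval_mul, (Polynomial.mem_roots hgm_ne).mp hc'gm, zero_mul]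
    by_cases hcc : c' = c
    · -- c is a multiple root
      subst hcc
      have hcount : 2 ≤ gm.roots.count c' := by
        have h1 : 0 < (gm.roots.erase c').count c' := Multiset.count_pos.mpr hc'
        have h2 := Multiset.count_erase_self c' gm.roots
        omega
      rw [Polynomial.count_roots] at hcount
      have hdvd2 : (X - Polynomial.C c') ^ 2 ∣ F :=
        dvd_trans (dvd_trans (pow_dvd_pow _ hcount) (Polynomial.pow_rootMultiplicity_dvd gm c'))
          hgm_dvd
      have : 2 ≤ Polynomial.rootMultiplicity c' F :=
        (Polynomial.le_rootMultiplicity_iff hFne).mpr hdvd2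
      have hmem : c' ∈ F.roots.erase c' := by
        rw [← Multiset.count_pos, Multiset.count_erase_self, Polynomial.count_roots]
        omega
      exact huniq c' hmem le_rfl
    · -- use Henselianity via AdjoinRoot g
      have hgirr : Irreducible g := minpoly.irreducible hcint
      have hc'g : Polynomial.aeval c' g = 0 := by
        rw [Polynomial.aeval_def, ← Polynomial.eval_map]
        exact (Polynomial.mem_roots hgm_ne).mp hc'gm
      letI := Fact.mk hgirr
      set Lr := AdjoinRoot g with hLr
      haveI : Module.Finite K Lr :=
        Module.Finite.of_basis (AdjoinRoot.powerBasis hgmon.ne_zero).basis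
      haveI : Algebra.IsAlgebraic K Lr := Algebra.IsAlgebraic.of_finite K Lr
      set π₁ : Lr →ₐ[K] Kbar := AdjoinRoot.liftAlgHom g (Algebra.ofId K Kbar) c
        (by rw [Algebra.toRingHom_ofId, ← Polynomial.aeval_def]; exact haevalc) with hπ₁
      set π₂ : Lr →ₐ[K] Kbar := AdjoinRoot.liftAlgHom g (Algebra.ofId K Kbar) c'
        (by rw [Algebra.toRingHom_ofId, ← Polynomial.aeval_def]; exact hc'g) with hπ₂
      have hcomap : ∀ (π : Lr →ₐ[K] Kbar),
          ((w.comap π.toRingHom).comap (algebraMap K Lr)).IsEquiv v := by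
        intro π
        have e : (π.toRingHom).comp (algebraMap K Lr) = ι := RingHom.ext fun k => π.commutes k
        rw [← Valuation.comap_comp, e]
        exact hequiv
      have hEquiv : (w.comap π₁.toRingHom).IsEquiv (w.comap π₂.toRingHom) :=
        hv Lr inferInstance _ _ (w.comap π₁.toRingHom) (w.comap π₂.toRingHom)
          (hcomap π₁) (hcomap π₂)
      set x : Lr := AdjoinRoot.root g - algebraMap K Lr a with hx
      set y : Lr := x * algebraMap K Lr (f.derivative.eval a) with hy
      set z : Lr := algebraMap K Lr (f.eval a) with hz
      have hπ₁y : π₁ y = (c - b) * F.derivative.eval b := by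
        rw [hy, map_mul, hx, map_sub, hπ₁, AdjoinRoot.liftAlgHom_root, AlgHom.commutes,
          AlgHom.commutes, hde]
      have hπ₂y : π₂ y = (c' - b) * F.derivative.eval b := by
        rw [hy, map_mul, hx, map_sub, hπ₂, AdjoinRoot.liftAlgHom_root, AlgHom.commutes,
          AlgHom.commutes, hde]
      have hπ₁z : π₁ z = F.eval b := by rw [hz, AlgHom.commutes, he]
      have hπ₂z : π₂ z = F.eval b := by rw [hz, AlgHom.commutes, he]
      have h1 : w (π₁ y) = w (π₁ z) := by
        rw [hπ₁y, hπ₁z, w.map_mul, heqw]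
      have h2 : w (π₂ y) = w (π₂ z) := by
        have hle := (hEquiv y z).mp (le_of_eq h1)
        have hge := (hEquiv z y).mp (ge_of_eq h1)
        exact le_antisymm hle hge
      have h3 : w (c' - b) * w (F.derivative.eval b) = w (c - b) * w (F.derivative.eval b) := by
        rw [← w.map_mul, ← hπ₂y, h2, hπ₂z, ← heqw]
      have h4 : w (c' - b) = w (c - b) := mul_right_cancel₀ hwd0 h3
      have hmem : c' ∈ F.roots.erase c :=
        (Multiset.mem_erase_of_ne hcc).mpr ((Polynomial.mem_roots hFne).mpr hc'F)
      exact huniq c' hmem (le_of_eq h4)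
  -- extract the root in K
  have hgX : g = Polynomial.X + Polynomial.C (g.coeff 0) := hgmon.eq_X_add_C hdeg1
  set cK := -(g.coeff 0) with hcK
  have hιcK : ι cK = c := by
    have := haevalc
    rw [hgX] at this
    simp only [map_add, Polynomial.aeval_X, Polynomial.aeval_C] at this
    rw [hcK, map_neg]
    show -(algebraMap K Kbar (g.coeff 0)) = c
    linear_combination -this
  refine ⟨cK, (W cK).mp (by rw [hιcK]; exact hwc), ?_, ?_⟩
  · apply hιinj
    rw [map_zero]
    have : ι (f.eval cK) = F.eval (ι cK) := by
      rw [hF, Polynomial.eval_map, Polynomial.eval₂_at_apply]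
    rw [this, hιcK, hceval]
  · have hmul : w (ι ((cK - a) * f.derivative.eval a)) = w (ι (f.eval a)) := by
      rw [map_mul ι, map_sub ι, hιcK, ← hb, ← hde, ← he, w.map_mul, heqw]
    have hvle : v ((cK - a) * f.derivative.eval a) ≤ v (f.eval a) :=
      (P _ _).mpr (le_of_eq hmul)
    have hvge : v (f.eval a) ≤ v ((cK - a) * f.derivative.eval a) :=
      (P _ _).mpr (ge_of_eq hmul)
    have := le_antisymm hvle hvge
    rw [v.map_mul] at this
    exact this
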